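/- Let F be a free filter on ℕ. Then F is selective if and only if the Mathias topology τ_M(F) and the Laver topology τ_L(F) on Finset ℕ coincide (a set is τ_M(F)-open if and only if it is τ_L(F)-open). -/

import Mathlib

/-- A free filter `F` on `ℕ` is selective if every sequence of elements of `F`
admits a diagonal intersection in `F`. -/
def Selective (F : Filter ℕ) : Prop :=
  ∀ A : ℕ → Set ℕ, (∀ n, A n ∈ F) → ∃ D ∈ F, ∀ i ∈ D, ∀ j ∈ D, i < j → j ∈ A i

/-- A set `U ⊆ Finset ℕ` is open in the Mathias topology determined by a filter `F`
on `ℕ` if every `t ∈ U` has a "Mathias neighborhood" `[t, A] ⊆ U` with `A ∈ F`. -/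
def IsMathiasOpen (F : Filter ℕ) (U : Set (Finset ℕ)) : Prop :=
  ∀ t ∈ U, ∃ A ∈ F, (∀ a ∈ A, ∀ x ∈ t, x < a) ∧
    ∀ s : Finset ℕ, ↑s ⊆ A → t ∪ s ∈ U

/-- A set `U ⊆ Finset ℕ` is open in the Laver topology determined by a filter `F`
on `ℕ` if for every `t ∈ U` the set of `n` exceeding all elements of `t` with
`t ∪ {n} ∈ U` belongs to `F`. -/
def IsLaverOpen (F : Filter ℕ) (U : Set (Finset ℕ)) : Prop :=
  ∀ t ∈ U, {n : ℕ | (∀ x ∈ t, x < n) ∧ t ∪ {n} ∈ U} ∈ F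

theorem cofinite_above (F : Filter ℕ) (hF : F ≤ Filter.cofinite) (t : Finset ℕ) :
    {n : ℕ | ∀ x ∈ t, x < n} ∈ F := by
  apply hF
  rw [Filter.mem_cofinite]
  apply Set.Finite.subset (Set.finite_Iic (t.sup id))
  intro n hn
  simp only [Set.mem_compl_iff, Set.mem_setOf_eq] at hn
  push_neg at hn
  obtain ⟨x, hx, hnx⟩ := hn
  exact Set.mem_Iic.mpr (hnx.trans (Finset.le_sup (f := id) hx))

/-- The Mathias topology on `Finset ℕ` determined by a free filter `F` on `ℕ`;
it is the topology of the free Boolean linear topological group on the almost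
discrete space associated with `F`. -/
def mathiasTop (F : Filter ℕ) (hF : F ≤ Filter.cofinite) : TopologicalSpace (Finset ℕ) where
  IsOpen := IsMathiasOpen F
  isOpen_univ := by
    intro t _
    exact ⟨{n | ∀ x ∈ t, x < n}, cofinite_above F hF t, fun a ha => ha, fun s _ => trivial⟩
  isOpen_inter := by
    intro U V hU hV t ht
    obtain ⟨A, hA, hA1, hA2⟩ := hU t ht.1
    obtain ⟨B, hB, hB1, hB2⟩ := hV t ht.2
    exact ⟨A ∩ B, Filter.inter_mem hA hB, fun a ha => hA1 a ha.1,
      fun s hs => ⟨hA2 s (hs.trans Set.inter_subset_left),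
        hB2 s (hs.trans Set.inter_subset_right)⟩⟩
  isOpen_sUnion := by
    intro S hS t ht
    obtain ⟨U, hU, htU⟩ := ht
    obtain ⟨A, hA, hA1, hA2⟩ := hS U hU t htU
    exact ⟨A, hA, hA1, fun s hs => ⟨U, hU, hA2 s hs⟩⟩

/-- The Laver topology on `Finset ℕ` determined by a free filter `F` on `ℕ`. -/
def laverTop (F : Filter ℕ) (hF : F ≤ Filter.cofinite) : TopologicalSpace (Finset ℕ) where
  IsOpen := IsLaverOpen F
  isOpen_univ := by
    intro t _
    exact Filter.mem_of_superset (cofinite_above F hF t) fun n hn => ⟨hn, trivial⟩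
  isOpen_inter := by
    intro U V hU hV t ht
    exact Filter.mem_of_superset (Filter.inter_mem (hU t ht.1) (hV t ht.2))
      fun n hn => ⟨hn.1.1, hn.1.2, hn.2.2⟩
  isOpen_sUnion := by
    intro S hS t ht
    obtain ⟨U, hU, htU⟩ := ht
    exact Filter.mem_of_superset (hS U hU t htU) fun n hn => ⟨hn.1, U, hU, hn.2⟩

/-- A free filter `F` on `ℕ` is selective if and only if the Mathias topology and
the Laver topology on `Finset ℕ` determined by `F` coincide: a set is
`τ_M(F)`-open iff it is `τ_L(F)`-open. -/
theorem mathias_imp_laver (F : Filter ℕ) (U : Set (Finset ℕ))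
    (h : IsMathiasOpen F U) : IsLaverOpen F U := by
  intro t ht
  obtain ⟨A, hA, h1, h2⟩ := h t ht
  filter_upwards [hA] with n hn
  refine ⟨h1 n hn, ?_⟩
  exact h2 {n} (by simpa using hn)

theorem selective_laver_imp_mathias (F : Filter ℕ) (hfree : F ≤ Filter.cofinite)
    (hsel : Selective F) (U : Set (Finset ℕ)) (h : IsLaverOpen F U) :
    IsMathiasOpen F U := by
  intro t ht
  set B : Finset ℕ → Set ℕ :=
    fun t' => {n : ℕ | t' ∈ U → ((∀ x ∈ t', x < n) ∧ t' ∪ {n} ∈ U)} with hB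
  have hBmem : ∀ t', B t' ∈ F := by
    intro t'
    by_cases ht' : t' ∈ U
    · exact Filter.mem_of_superset (h t' ht') fun n hn _ => hn
    · have : B t' = Set.univ := by
        ext n; simp [hB, ht']
      rw [this]; exact Filter.univ_mem
  set A : ℕ → Set ℕ := fun n => ⋂ s ∈ (Finset.range (n + 1)).powerset, B (t ∪ s) with hA
  have hAmem : ∀ n, A n ∈ F := by
    intro n
    rw [hA, Filter.biInter_finset_mem]
    intro s _
    exact hBmem _
  obtain ⟨D, hD, hDsel⟩ := hsel A hAmem
  refine ⟨D ∩ B t ∩ {n | ∀ x ∈ t, x < n},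
    Filter.inter_mem (Filter.inter_mem hD (hBmem t)) (cofinite_above F hfree t),
    fun a ha x hx => ha.2 x hx, ?_⟩
  intro s hs
  induction s using Finset.induction_on_max with
  | empty => simpa using ht
  | insert a s hlt ih =>
    have hsub : ↑s ⊆ D ∩ B t ∩ {n | ∀ x ∈ t, x < n} := by
      intro x hx; exact hs (by simpa using Or.inr hx)
    have haE : a ∈ D ∩ B t ∩ {n | ∀ x ∈ t, x < n} := hs (by simp)
    have hts : t ∪ s ∈ U := ih hsub
    rcases s.eq_empty_or_nonempty with rfl | hne
    · have := haE.1.2 ht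
      simpa using this.2
    · set i := s.max' hne with hi
      have hiD : i ∈ D := (hsub (s.max'_mem hne)).1.1
      have hia : i < a := hlt i (s.max'_mem hne)
      have haA : a ∈ A i := hDsel i hiD a haE.1.1 hia
      rw [hA] at haA
      have hspow : s ∈ (Finset.range (i + 1)).powerset := by
        rw [Finset.mem_powerset]
        intro x hx
        rw [Finset.mem_range]
        exact Nat.lt_succ_of_le (s.le_max' x hx)
      have haB : a ∈ B (t ∪ s) := by exact Set.mem_iInter₂.mp haA s hspow
      have := (haB hts).2
      have heq : t ∪ insert a s = (t ∪ s) ∪ {a} := by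
        ext x; simp [or_comm, or_assoc, Finset.mem_insert]
      rw [heq]
      exact this

theorem stmt5 (F : Filter ℕ) (hproper : (∅ : Set ℕ) ∉ F)
    (hfree : F ≤ Filter.cofinite) :
    Selective F ↔
      ∀ U : Set (Finset ℕ),
        (mathiasTop F hfree).IsOpen U ↔ (laverTop F hfree).IsOpen U := by
  constructor
  · intro hsel U
    exact ⟨mathias_imp_laver F U, selective_laver_imp_mathias F hfree hsel U⟩
  · intro htop A hAmem
    set U : Set (Finset ℕ) := {s | ∀ i ∈ s, ∀ j ∈ s, i < j → j ∈ A i} with hU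
    have hLaver : IsLaverOpen F U := by
      intro t ht
      have hmem : {n : ℕ | ∀ x ∈ t, x < n} ∩ ⋂ i ∈ t, A i ∈ F :=
        Filter.inter_mem (cofinite_above F hfree t)
          ((Filter.biInter_finset_mem _).mpr fun i _ => hAmem i)
      refine Filter.mem_of_superset hmem fun n hn => ⟨hn.1, ?_⟩
      intro i hi j hj hij
      rcases Finset.mem_union.mp hj with hj | hj
      · rcases Finset.mem_union.mp hi with hi | hi
        · exact ht i hi j hj hij
        · exact absurd (hn.1 j hj) (by simp at hi; subst hi; omega)
      · simp only [Finset.mem_singleton] at hj; subst hj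
        rcases Finset.mem_union.mp hi with hi | hi
        · exact Set.mem_iInter₂.mp hn.2 i hi
        · simp at hi; omega
    have hMathias : IsMathiasOpen F U := ((htop U).mpr hLaver : IsMathiasOpen F U)
    have hempty : (∅ : Finset ℕ) ∈ U := by simp [hU]
    obtain ⟨D, hD, _, hD2⟩ := hMathias ∅ hempty
    refine ⟨D, hD, fun i hi j hj hij => ?_⟩
    have : (∅ : Finset ℕ) ∪ {i, j} ∈ U := hD2 {i, j} (by
      intro x hx; simp at hx; rcases hx with rfl | rfl <;> assumption)
    simp only [Finset.empty_union] at this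
    exact this i (by simp) j (by simp) hij
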